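/- Let E be a Banach lattice and T ∈ L(E) a positive operator such that for some m₀ ∈ ℕ the sequence (T^{n m₀})_{n∈ℕ} converges strongly to a rank-1 operator P. Then (T^n)_{n∈ℕ} converges strongly to P. -/

import Mathlib

open Filter Topology

/-- In a normed lattice group with a real normed space structure, multiplication by a
nonnegative real scalar preserves the positive cone. -/
lemma aux_smul_nonneg {E : Type*} [NormedAddCommGroup E] [Lattice E] [HasSolidNorm E]
    [IsOrderedAddMonoid E] [NormedSpace ℝ E]
    {r : ℝ} (hr : 0 ≤ r) {x : E} (hx : 0 ≤ x) : 0 ≤ r • x := by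
  -- powers of two semiclosed
  have h2k : ∀ (k : ℕ) (y : E), 0 ≤ (2 ^ k) • y → 0 ≤ y := by
    intro k
    induction k with
    | zero => intro y hy; simpa using hy
    | succ k ih =>
      intro y hy
      have : (2 : ℕ) ^ (k + 1) • y = 2 ^ k • (2 • y) := by
        rw [← mul_smul, pow_succ, mul_comm]
      rw [this] at hy
      exact nsmul_two_semiclosed (ih _ hy)
  -- dyadic rationals
  have hdy : ∀ (m k : ℕ), 0 ≤ ((m : ℝ) / 2 ^ k) • x := by
    intro m k
    apply h2k k
    have : (2 : ℕ) ^ k • (((m : ℝ) / 2 ^ k) • x) = m • x := by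
      rw [← Nat.cast_smul_eq_nsmul ℝ, smul_smul, ← Nat.cast_smul_eq_nsmul ℝ (m) x]
      congr 1
      push_cast
      field_simp
    rw [this]
    exact nsmul_nonneg hx m
  -- approximate r by dyadic rationals
  have hconv : Tendsto (fun k : ℕ => ((⌊r * 2 ^ k⌋₊ : ℝ) / 2 ^ k)) atTop (𝓝 r) := by
    have hup : ∀ k : ℕ, ((⌊r * 2 ^ k⌋₊ : ℝ) / 2 ^ k) ≤ r := by
      intro k
      rw [div_le_iff₀ (by positivity)]
      exact Nat.floor_le (by positivity)
    have hlo : ∀ k : ℕ, r - 1 / 2 ^ k ≤ ((⌊r * 2 ^ k⌋₊ : ℝ) / 2 ^ k) := by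
      intro k
      rw [sub_le_iff_le_add, ← add_div, le_div_iff₀ (by positivity)]
      have := Nat.lt_floor_add_one (r * 2 ^ k)
      linarith
    have hz : Tendsto (fun k : ℕ => r - 1 / 2 ^ k) atTop (𝓝 r) := by
      have : Tendsto (fun k : ℕ => (1:ℝ) / 2 ^ k) atTop (𝓝 0) := by
        simpa [one_div, inv_pow] using
          tendsto_pow_atTop_nhds_zero_of_lt_one (by norm_num : (0:ℝ) ≤ 2⁻¹) (by norm_num)
      simpa using (tendsto_const_nhds (x := r)).sub this
    exact tendsto_of_tendsto_of_tendsto_of_le_of_le hz tendsto_const_nhds hlo hup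
  have hsm : Tendsto (fun k : ℕ => ((⌊r * 2 ^ k⌋₊ : ℝ) / 2 ^ k) • x) atTop (𝓝 (r • x)) :=
    hconv.smul_const x
  exact le_of_tendsto_of_tendsto' tendsto_const_nhds hsm (fun k => hdy _ k)

/-- If `T` is a positive operator on a Banach lattice and for some `m₀ ∈ ℕ` the powers
`(T^{n m₀})_{n ∈ ℕ}` converge strongly to a rank-one operator `P`, then `(T^n)_{n ∈ ℕ}`
converges strongly to `P`. -/
theorem powers_converge_of_subpowers_converge_rank_one
    {E : Type*} [NormedAddCommGroup E] [Lattice E] [HasSolidNorm E]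
    [IsOrderedAddMonoid E] [NormedSpace ℝ E] [CompleteSpace E]
    (T : E →L[ℝ] E) (hpos : ∀ f : E, 0 ≤ f → 0 ≤ T f)
    (m₀ : ℕ) (hm₀ : 1 ≤ m₀)
    (P : E →L[ℝ] E)
    (hrank : ∃ (φ : E →L[ℝ] ℝ) (f₀ : E), φ ≠ 0 ∧ f₀ ≠ 0 ∧ ∀ g : E, P g = φ g • f₀)
    (hconv : ∀ x : E, Tendsto (fun n : ℕ => (T ^ (n * m₀)) x) atTop (𝓝 (P x))) :
    ∀ x : E, Tendsto (fun n : ℕ => (T ^ n) x) atTop (𝓝 (P x)) := by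
  classical
  obtain ⟨φ, f₀, hφ, hf₀, hP⟩ := hrank
  -- positivity of powers
  have hpow : ∀ n : ℕ, ∀ f : E, 0 ≤ f → 0 ≤ (T ^ n) f := by
    intro n
    induction n with
    | zero => intro f hf; simpa using hf
    | succ n ih =>
      intro f hf
      rw [pow_succ, ContinuousLinearMap.mul_apply]
      exact ih _ (hpos f hf)
  have hPpos : ∀ f : E, 0 ≤ f → 0 ≤ P f := fun f hf =>
    le_of_tendsto_of_tendsto' tendsto_const_nhds (hconv f) (fun n => hpow _ f hf)
  -- find g₀ ≥ 0 with φ g₀ ≠ 0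
  obtain ⟨g, hg⟩ : ∃ g : E, φ g ≠ 0 := by
    by_contra h
    push_neg at h
    exact hφ (by ext g; simpa using h g)
  obtain ⟨g₀, hg₀, hc0⟩ : ∃ g₀ : E, 0 ≤ g₀ ∧ φ g₀ ≠ 0 := by
    by_cases h1 : φ (g⁺) ≠ 0
    · exact ⟨g⁺, posPart_nonneg g, h1⟩
    · refine ⟨g⁻, negPart_nonneg g, ?_⟩
      push_neg at h1
      intro h2
      apply hg
      have := posPart_sub_negPart g
      calc φ g = φ (g⁺ - g⁻) := by rw [this]
        _ = φ (g⁺) - φ (g⁻) := by rw [map_sub]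
        _ = 0 := by rw [h1, h2, sub_zero]
  set c₀ : ℝ := φ g₀ with hc₀def
  -- normalized data: f₁ ≥ 0
  set f₁ : E := c₀ • f₀ with hf₁def
  set φ₁ : E →L[ℝ] ℝ := c₀⁻¹ • φ with hφ₁def
  have hP1 : ∀ g : E, P g = φ₁ g • f₁ := by
    intro g
    rw [hP g, hφ₁def, hf₁def]
    simp only [ContinuousLinearMap.smul_apply, smul_smul, smul_eq_mul]
    rw [mul_comm c₀⁻¹ (φ g), mul_assoc, inv_mul_cancel₀ hc0, mul_one]
  have hf₁ : f₁ ≠ 0 := smul_ne_zero hc0 hf₀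
  have hf₁pos : 0 ≤ f₁ := by
    have := hPpos g₀ hg₀
    rwa [hP g₀] at this
  -- T commutes with P
  have hcomm : ∀ x : E, T (P x) = P (T x) := by
    intro x
    have h1 : Tendsto (fun n : ℕ => T ((T ^ (n * m₀)) x)) atTop (𝓝 (T (P x))) :=
      (T.continuous.tendsto _).comp (hconv x)
    have h2 : (fun n : ℕ => T ((T ^ (n * m₀)) x)) = fun n : ℕ => (T ^ (n * m₀)) (T x) := by
      funext n
      rw [← ContinuousLinearMap.mul_apply, ← pow_succ', pow_succ, ContinuousLinearMap.mul_apply]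
    rw [h2] at h1
    exact tendsto_nhds_unique h1 (hconv (T x))
  -- T^m₀ P = P
  have hTm₀P : ∀ x : E, (T ^ m₀) (P x) = P x := by
    intro x
    have h1 : Tendsto (fun n : ℕ => (T ^ m₀) ((T ^ (n * m₀)) x)) atTop
        (𝓝 ((T ^ m₀) (P x))) := ((T ^ m₀).continuous.tendsto _).comp (hconv x)
    have h2 : (fun n : ℕ => (T ^ m₀) ((T ^ (n * m₀)) x))
        = fun n : ℕ => (T ^ ((n + 1) * m₀)) x := by
      funext n
      rw [← ContinuousLinearMap.mul_apply, ← pow_add]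
      congr 2
      ring
    rw [h2] at h1
    have h3 : Tendsto (fun n : ℕ => (T ^ ((n + 1) * m₀)) x) atTop (𝓝 (P x)) :=
      (hconv x).comp (tendsto_add_atTop_nat 1)
    exact tendsto_nhds_unique h1 h3
  -- T^(k m₀) P = P
  have hTkm₀P : ∀ (k : ℕ) (x : E), (T ^ (k * m₀)) (P x) = P x := by
    intro k
    induction k with
    | zero => intro x; simp
    | succ k ih =>
      intro x
      have : (k + 1) * m₀ = k * m₀ + m₀ := by ring
      rw [this, pow_add, ContinuousLinearMap.mul_apply, hTm₀P x, ih x]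
  -- P is idempotent
  have hPP : ∀ x : E, P (P x) = P x := by
    intro x
    have h1 : Tendsto (fun n : ℕ => (T ^ (n * m₀)) (P x)) atTop (𝓝 (P (P x))) := hconv (P x)
    have h2 : (fun n : ℕ => (T ^ (n * m₀)) (P x)) = fun _ : ℕ => P x := by
      funext n; exact hTkm₀P n x
    rw [h2] at h1
    exact tendsto_nhds_unique h1 tendsto_const_nhds
  -- P f₁ = f₁
  have hφ₁g₀ : φ₁ g₀ = 1 := by
    rw [hφ₁def]
    simp [inv_mul_cancel₀ hc0]
    exact inv_mul_cancel₀ hc0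
  have hPg₀ : P g₀ = f₁ := by rw [hP1 g₀, hφ₁g₀, one_smul]
  have hPf₁ : P f₁ = f₁ := by
    have := hPP g₀
    rwa [hPg₀] at this
  have hinj : ∀ a b : ℝ, a • f₁ = b • f₁ → a = b := by
    intro a b hab
    by_contra h
    have : (a - b) • f₁ = 0 := by rw [sub_smul, hab, sub_self]
    rcases smul_eq_zero.mp this with h' | h'
    · exact h (sub_eq_zero.mp h')
    · exact hf₁ h'
  -- T f₁ = c • f₁ with c ≥ 0
  set c : ℝ := φ₁ (T f₁) with hcdef
  have hTf₁ : T f₁ = c • f₁ := by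
    calc T f₁ = T (P f₁) := by rw [hPf₁]
      _ = P (T f₁) := hcomm f₁
      _ = c • f₁ := by rw [hP1]
  have hc_nonneg : 0 ≤ c := by
    by_contra h
    push_neg at h
    have h1 : 0 ≤ c • f₁ := by rw [← hTf₁]; exact hpos f₁ hf₁pos
    have h2 : c • f₁ ≤ 0 := by
      have : 0 ≤ (-c) • f₁ := aux_smul_nonneg (by linarith) hf₁pos
      rw [neg_smul] at this
      exact neg_nonneg.mp this
    have h3 : c • f₁ = 0 := le_antisymm h2 h1
    rcases smul_eq_zero.mp h3 with h' | h'
    · exact h.ne h'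
    · exact hf₁ h'
  have hTn : ∀ n : ℕ, (T ^ n) f₁ = c ^ n • f₁ := by
    intro n
    induction n with
    | zero => simp
    | succ n ih =>
      rw [pow_succ, ContinuousLinearMap.mul_apply, hTf₁, map_smul, ih, smul_smul, pow_succ]
      ring_nf
  have hTm₀f₁ : (T ^ m₀) f₁ = f₁ := by
    have := hTm₀P f₁
    rwa [hPf₁] at this
  have hcm₀ : c ^ m₀ = 1 := by
    apply hinj
    rw [← hTn m₀, hTm₀f₁, one_smul]
  have hc1 : c = 1 := by
    rcases lt_trichotomy c 1 with h | h | h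
    · exfalso
      have : c ^ m₀ < 1 := pow_lt_one₀ hc_nonneg h (by omega)
      rw [hcm₀] at this; exact lt_irrefl _ this
    · exact h
    · exfalso
      have : 1 < c ^ m₀ := one_lt_pow₀ h (by omega)
      rw [hcm₀] at this; exact lt_irrefl _ this
  have hTrf₁ : ∀ r : ℕ, (T ^ r) f₁ = f₁ := by
    intro r; rw [hTn r, hc1, one_pow, one_smul]
  have hTrP : ∀ (r : ℕ) (x : E), (T ^ r) (P x) = P x := by
    intro r x
    rw [hP1 x, map_smul, hTrf₁]
  -- operator norm bound
  set M : ℝ := max 1 ‖T‖ with hMdef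
  have hM1 : (1:ℝ) ≤ M := le_max_left _ _
  have hMbound : ∀ (r : ℕ) (y : E), ‖(T ^ r) y‖ ≤ M ^ r * ‖y‖ := by
    intro r
    induction r with
    | zero => intro y; simp
    | succ r ih =>
      intro y
      rw [pow_succ', ContinuousLinearMap.mul_apply]
      calc ‖T ((T ^ r) y)‖ ≤ ‖T‖ * ‖(T ^ r) y‖ := T.le_opNorm _
        _ ≤ M * (M ^ r * ‖y‖) := by
            apply mul_le_mul (le_max_right _ _) (ih y) (norm_nonneg _)
            linarith
        _ = M ^ (r + 1) * ‖y‖ := by ring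
  have hMbig : ∀ (r : ℕ), r ≤ m₀ → ∀ y : E, ‖(T ^ r) y‖ ≤ M ^ m₀ * ‖y‖ := by
    intro r hr y
    calc ‖(T ^ r) y‖ ≤ M ^ r * ‖y‖ := hMbound r y
      _ ≤ M ^ m₀ * ‖y‖ := by
          apply mul_le_mul_of_nonneg_right _ (norm_nonneg _)
          exact pow_le_pow_right₀ hM1 hr
  -- main argument
  intro x
  have key : ∀ n : ℕ, (T ^ n) x - P x
      = (T ^ (n % m₀)) ((T ^ (n / m₀ * m₀)) x - P x) := by
    intro n
    rw [map_sub, hTrP]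
    congr 1
    rw [← ContinuousLinearMap.mul_apply, ← pow_add, Nat.mod_add_div']
  have hdiv : Tendsto (fun n : ℕ => n / m₀) atTop atTop := by
    apply tendsto_atTop_atTop.2
    intro b
    refine ⟨b * m₀, fun n hn => ?_⟩
    rw [Nat.le_div_iff_mul_le (by omega)]
    exact hn
  have h0 : Tendsto (fun q : ℕ => ‖(T ^ (q * m₀)) x - P x‖) atTop (𝓝 0) := by
    have := ((hconv x).sub (tendsto_const_nhds (x := P x))).norm
    simpa using this
  have h1 : Tendsto (fun n : ℕ => M ^ m₀ * ‖(T ^ (n / m₀ * m₀)) x - P x‖) atTop (𝓝 0) := by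
    have := (h0.comp hdiv).const_mul (M ^ m₀)
    simpa using this
  have h2 : Tendsto (fun n : ℕ => (T ^ n) x - P x) atTop (𝓝 0) := by
    apply squeeze_zero_norm _ h1
    intro n
    rw [key n]
    exact hMbig (n % m₀) (le_of_lt (Nat.mod_lt n (by omega))) _
  have := h2.add (tendsto_const_nhds (x := P x))
  simpa using this
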